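/- Let n ≥ 3 and let G be the graph consisting of a vertex v joined to all vertices of a complete bipartite graph with parts V_1, V_2 of sizes floor((n-1)/2) and ceil((n-1)/2). Let \vec{B} be the orientation of the bowtie in which one triangle has both non-shared edges entering the center and the other triangle has both non-shared edges exiting the center. Then the number of \vec{B}-free orientations of G equals 2^{|V_1||V_2|}·(2·2^{|V_1|} + 2·2^{|V_2|} - 4). -/

import Mathlib

def IsOrientation {V : Type*} (G : SimpleGraph V) (D : V → V → Prop) : Prop :=
  ∀ u v : V, (G.Adj u v ↔ (D u v ∨ D v u)) ∧ ¬(D u v ∧ D v u)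

def DigraphContains {W V : Type*} (H : W → W → Prop) (D : V → V → Prop) : Prop :=
  ∃ f : W → V, Function.Injective f ∧ ∀ a b : W, H a b → D (f a) (f b)

noncomputable def numFreeOrientations {V W : Type*} (G : SimpleGraph V) (H : W → W → Prop) : ℕ :=
  Nat.card {D : V → V → Prop // IsOrientation G D ∧ ¬ DigraphContains H D}

def partOf {a b : ℕ} : Fin 1 ⊕ (Fin a ⊕ Fin b) → Fin 3
  | Sum.inl _ => 0
  | Sum.inr (Sum.inl _) => 1
  | Sum.inr (Sum.inr _) => 2

/-- The graph consisting of a vertex `v` joined to all vertices of the complete bipartite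
graph with parts of sizes `a` and `b` (the complete tripartite graph `K_{1,a,b}`). -/
def coneBipartite (a b : ℕ) : SimpleGraph (Fin 1 ⊕ (Fin a ⊕ Fin b)) where
  Adj x y := partOf x ≠ partOf y
  symm := ⟨fun _ _ h => h.symm⟩
  loopless := ⟨fun _ h => h rfl⟩

/-- The orientation of the bowtie (triangles `{0,1,2}` and `{0,3,4}` sharing the center `0`)
in which one triangle has both non-shared edges entering the center and the other triangle
has both non-shared edges exiting the center. -/
def bowtieInOut : Fin 5 → Fin 5 → Prop := fun x y =>
  (x, y) ∈ ({(1,0), (2,0), (1,2), (0,3), (0,4), (3,4)} : Set (Fin 5 × Fin 5))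

namespace Stmt8Aux

variable {a b : ℕ}

abbrev Vt (a b : ℕ) := Fin 1 ⊕ (Fin a ⊕ Fin b)

def vC : Vt a b := Sum.inl 0
def w₁ (x : Fin a) : Vt a b := Sum.inr (Sum.inl x)
def w₂ (y : Fin b) : Vt a b := Sum.inr (Sum.inr y)

abbrev St (a b : ℕ) := ((Fin a → Bool) × (Fin b → Bool)) × (Fin a → Fin b → Bool)

def toD (s : St a b) : Vt a b → Vt a b → Prop := fun u w =>
  match u, w with
  | Sum.inl _, Sum.inr (Sum.inl x) => s.1.1 x = true
  | Sum.inr (Sum.inl x), Sum.inl _ => s.1.1 x = false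
  | Sum.inl _, Sum.inr (Sum.inr y) => s.1.2 y = true
  | Sum.inr (Sum.inr y), Sum.inl _ => s.1.2 y = false
  | Sum.inr (Sum.inl x), Sum.inr (Sum.inr y) => s.2 x y = true
  | Sum.inr (Sum.inr y), Sum.inr (Sum.inl x) => s.2 x y = false
  | _, _ => False

lemma toD_isOrientation (s : St a b) : IsOrientation (coneBipartite a b) (toD s) := by
  intro u w
  rcases u with u | u | u <;> rcases w with w | w | w <;>
    simp [toD, coneBipartite, partOf] <;>
    first
      | (cases s.1.1 u <;> simp) | (cases s.1.2 u <;> simp)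
      | (cases s.2 u w <;> simp) | (cases s.1.1 w <;> simp)
      | (cases s.1.2 w <;> simp) | (cases s.2 w u <;> simp)
      | skip

lemma toD_injective : Function.Injective (toD : St a b → _) := by
  intro s t h
  have h' : ∀ u w, toD s u w ↔ toD t u w := fun u w => by rw [h]
  refine Prod.ext (Prod.ext ?_ ?_) ?_
  · funext x
    have := h' vC (w₁ x)
    simp only [toD, vC, w₁] at this
    cases hs : s.1.1 x <;> cases ht : t.1.1 x <;> simp [hs, ht] at this ⊢
  · funext y
    have := h' vC (w₂ y)
    simp only [toD, vC, w₂] at this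
    cases hs : s.1.2 y <;> cases ht : t.1.2 y <;> simp [hs, ht] at this ⊢
  · funext x y
    have := h' (w₁ x) (w₂ y)
    simp only [toD, w₁, w₂] at this
    cases hs : s.2 x y <;> cases ht : t.2 x y <;> simp [hs, ht] at this ⊢

lemma ite_bool_eq_true {p : Prop} [Decidable p] :
    ((if p then true else false) = true) ↔ p := by split <;> simp_all

lemma ite_bool_eq_false {p : Prop} [Decidable p] :
    ((if p then true else false) = false) ↔ ¬ p := by split <;> simp_all

lemma flipD {D : Vt a b → Vt a b → Prop} (hD : IsOrientation (coneBipartite a b) D)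
    {u w : Vt a b} (h : partOf u ≠ partOf w) : ¬ D u w ↔ D w u :=
  ⟨fun hn => (((hD u w).1).mp h).resolve_left hn, fun hd hn => (hD u w).2 ⟨hn, hd⟩⟩

lemma nadjD {D : Vt a b → Vt a b → Prop} (hD : IsOrientation (coneBipartite a b) D)
    {u w : Vt a b} (h : partOf u = partOf w) : ¬ D u w := by
  intro hd
  exact (by simpa [coneBipartite, h] using ((hD u w).1).mpr (Or.inl hd) : False)

lemma inl_eq_vC (u : Fin 1) : (Sum.inl u : Vt a b) = vC := by
  rw [Fin.fin_one_eq_zero u]; rfl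

open Classical in
lemma toD_surjective (D : Vt a b → Vt a b → Prop) (hD : IsOrientation (coneBipartite a b) D) :
    ∃ s : St a b, toD s = D := by
  refine ⟨⟨⟨fun x => if D vC (w₁ x) then true else false,
            fun y => if D vC (w₂ y) then true else false⟩,
           fun x y => if D (w₁ x) (w₂ y) then true else false⟩, ?_⟩
  funext u w
  apply propext
  rcases u with u | x | y <;> rcases w with w | x' | y'
  · rw [inl_eq_vC u, inl_eq_vC w]
    exact iff_of_false id (nadjD hD rfl)
  · rw [inl_eq_vC u]
    exact ite_bool_eq_true
  · rw [inl_eq_vC u]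
    exact ite_bool_eq_true
  · rw [inl_eq_vC w]
    exact ite_bool_eq_false.trans (flipD hD (by simp [vC, w₁, partOf]))
  · exact iff_of_false id (nadjD hD rfl)
  · exact ite_bool_eq_true
  · rw [inl_eq_vC w]
    exact ite_bool_eq_false.trans (flipD hD (by simp [vC, w₂, partOf]))
  · exact ite_bool_eq_false.trans (flipD hD (by simp [w₁, w₂, partOf]))
  · exact iff_of_false id (nadjD hD rfl)


lemma inj5 {α : Type*} (v0 v1 v2 v3 v4 : α)
    (h01 : v0 ≠ v1) (h02 : v0 ≠ v2) (h03 : v0 ≠ v3) (h04 : v0 ≠ v4)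
    (h12 : v1 ≠ v2) (h13 : v1 ≠ v3) (h14 : v1 ≠ v4)
    (h23 : v2 ≠ v3) (h24 : v2 ≠ v4) (h34 : v3 ≠ v4) :
    Function.Injective ![v0, v1, v2, v3, v4] := by
  intro i j h
  fin_cases i <;> fin_cases j <;> first | rfl | (exfalso; simp_all)

lemma contains_of {D : Vt a b → Vt a b → Prop} (v0 v1 v2 v3 v4 : Vt a b)
    (h01 : v0 ≠ v1) (h02 : v0 ≠ v2) (h03' : v0 ≠ v3) (h04' : v0 ≠ v4)
    (h12 : v1 ≠ v2) (h13 : v1 ≠ v3) (h14 : v1 ≠ v4)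
    (h23 : v2 ≠ v3) (h24 : v2 ≠ v4) (h34' : v3 ≠ v4)
    (h10 : D v1 v0) (h20 : D v2 v0) (h12d : D v1 v2)
    (h03 : D v0 v3) (h04 : D v0 v4) (h34 : D v3 v4) :
    DigraphContains bowtieInOut D := by
  refine ⟨![v0, v1, v2, v3, v4],
    inj5 v0 v1 v2 v3 v4 h01 h02 h03' h04' h12 h13 h14 h23 h24 h34', ?_⟩
  intro p q hpq
  simp only [bowtieInOut, Set.mem_insert_iff, Set.mem_singleton_iff, Prod.mk.injEq] at hpq
  rcases hpq with ⟨rfl, rfl⟩ | ⟨rfl, rfl⟩ | ⟨rfl, rfl⟩ | ⟨rfl, rfl⟩ | ⟨rfl, rfl⟩ | ⟨rfl, rfl⟩ <;>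
    simpa using (by assumption : _)

lemma eq_vC_of_part {u : Vt a b} (h : partOf u = 0) : u = vC := by
  rcases u with u | x | y
  · exact inl_eq_vC u
  · exact absurd h (by simp [partOf])
  · exact absurd h (by simp [partOf])

lemma eq_w₁_of_part {u : Vt a b} (h : partOf u = 1) : ∃ x, u = w₁ x := by
  rcases u with u | x | y
  · exact absurd h (by simp [partOf])
  · exact ⟨x, rfl⟩
  · exact absurd h (by simp [partOf])

lemma eq_w₂_of_part {u : Vt a b} (h : partOf u = 2) : ∃ y, u = w₂ y := by
  rcases u with u | x | y
  · exact absurd h (by simp [partOf])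
  · exact absurd h (by simp [partOf])
  · exact ⟨y, rfl⟩

lemma contains_iff {D : Vt a b → Vt a b → Prop} (hD : IsOrientation (coneBipartite a b) D) :
    DigraphContains bowtieInOut D ↔
      ((∃ x, D (w₁ x) vC) ∧ (∃ x, D vC (w₁ x))) ∧
        ((∃ y, D (w₂ y) vC) ∧ (∃ y, D vC (w₂ y))) := by
  constructor
  · rintro ⟨f, hinj, hf⟩
    have e10 : D (f 1) (f 0) := hf 1 0 (by simp [bowtieInOut])
    have e20 : D (f 2) (f 0) := hf 2 0 (by simp [bowtieInOut])
    have e12 : D (f 1) (f 2) := hf 1 2 (by simp [bowtieInOut])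
    have e03 : D (f 0) (f 3) := hf 0 3 (by simp [bowtieInOut])
    have e04 : D (f 0) (f 4) := hf 0 4 (by simp [bowtieInOut])
    have e34 : D (f 3) (f 4) := hf 3 4 (by simp [bowtieInOut])
    have Dadj : ∀ u w : Vt a b, D u w → partOf u ≠ partOf w :=
      fun u w h hp => nadjD hD hp h
    have tri : ∀ p q r : Fin 3, p ≠ q → q ≠ r → p ≠ r → p = 0 ∨ q = 0 ∨ r = 0 := by decide
    have pair : ∀ p q : Fin 3, p ≠ 0 → q ≠ 0 → p ≠ q →
        (p = 1 ∧ q = 2) ∨ (p = 2 ∧ q = 1) := by decide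
    -- f 0 = vC
    have hf0 : f 0 = vC := by
      rcases tri (partOf (f 0)) (partOf (f 1)) (partOf (f 2))
          (Ne.symm (Dadj _ _ e10)) (Dadj _ _ e12) (Ne.symm (Dadj _ _ e20)) with h | h | h
      · exact eq_vC_of_part h
      · exfalso
        rcases tri (partOf (f 0)) (partOf (f 3)) (partOf (f 4))
            (Dadj _ _ e03) (Dadj _ _ e34) (Dadj _ _ e04) with h' | h' | h'
        · exact absurd (hinj ((eq_vC_of_part h).trans (eq_vC_of_part h').symm)) (by decide)
        · exact absurd (hinj ((eq_vC_of_part h).trans (eq_vC_of_part h').symm)) (by decide)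
        · exact absurd (hinj ((eq_vC_of_part h).trans (eq_vC_of_part h').symm)) (by decide)
      · exfalso
        rcases tri (partOf (f 0)) (partOf (f 3)) (partOf (f 4))
            (Dadj _ _ e03) (Dadj _ _ e34) (Dadj _ _ e04) with h' | h' | h'
        · exact absurd (hinj ((eq_vC_of_part h).trans (eq_vC_of_part h').symm)) (by decide)
        · exact absurd (hinj ((eq_vC_of_part h).trans (eq_vC_of_part h').symm)) (by decide)
        · exact absurd (hinj ((eq_vC_of_part h).trans (eq_vC_of_part h').symm)) (by decide)
    rw [hf0] at e10 e20 e03 e04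
    have p1 : partOf (f 1) ≠ 0 := by
      intro h
      exact absurd (hinj ((eq_vC_of_part h).trans hf0.symm)) (by decide)
    have p2 : partOf (f 2) ≠ 0 := by
      intro h
      exact absurd (hinj ((eq_vC_of_part h).trans hf0.symm)) (by decide)
    have p3 : partOf (f 3) ≠ 0 := by
      intro h
      exact absurd (hinj ((eq_vC_of_part h).trans hf0.symm)) (by decide)
    have p4 : partOf (f 4) ≠ 0 := by
      intro h
      exact absurd (hinj ((eq_vC_of_part h).trans hf0.symm)) (by decide)
    constructor
    · constructor
      · -- ∃ x, D (w₁ x) vC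
        rcases pair _ _ p1 p2 (Dadj _ _ e12) with ⟨h1, _⟩ | ⟨_, h2⟩
        · obtain ⟨x, hx⟩ := eq_w₁_of_part h1
          exact ⟨x, hx ▸ e10⟩
        · obtain ⟨x, hx⟩ := eq_w₁_of_part h2
          exact ⟨x, hx ▸ e20⟩
      · -- ∃ x, D vC (w₁ x)
        rcases pair _ _ p3 p4 (Dadj _ _ e34) with ⟨h3, _⟩ | ⟨_, h4⟩
        · obtain ⟨x, hx⟩ := eq_w₁_of_part h3
          exact ⟨x, hx ▸ e03⟩
        · obtain ⟨x, hx⟩ := eq_w₁_of_part h4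
          exact ⟨x, hx ▸ e04⟩
    · constructor
      · rcases pair _ _ p1 p2 (Dadj _ _ e12) with ⟨_, h2⟩ | ⟨h1, _⟩
        · obtain ⟨y, hy⟩ := eq_w₂_of_part h2
          exact ⟨y, hy ▸ e20⟩
        · obtain ⟨y, hy⟩ := eq_w₂_of_part h1
          exact ⟨y, hy ▸ e10⟩
      · rcases pair _ _ p3 p4 (Dadj _ _ e34) with ⟨_, h4⟩ | ⟨h3, _⟩
        · obtain ⟨y, hy⟩ := eq_w₂_of_part h4
          exact ⟨y, hy ▸ e04⟩
        · obtain ⟨y, hy⟩ := eq_w₂_of_part h3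
          exact ⟨y, hy ▸ e03⟩
  · rintro ⟨⟨⟨x, hx⟩, ⟨x', hx'⟩⟩, ⟨⟨y, hy⟩, ⟨y', hy'⟩⟩⟩
    have hxx' : (w₁ x : Vt a b) ≠ w₁ x' := by
      intro h
      rw [← h] at hx'
      exact (hD vC (w₁ x)).2 ⟨hx', hx⟩
    have hyy' : (w₂ y : Vt a b) ≠ w₂ y' := by
      intro h
      rw [← h] at hy'
      exact (hD vC (w₂ y)).2 ⟨hy', hy⟩
    have ne1 : ∀ (p : Fin a) (q : Fin b), (vC : Vt a b) ≠ w₁ p ∧ (vC : Vt a b) ≠ w₂ q ∧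
        (w₁ p : Vt a b) ≠ w₂ q := by
      intro p q
      refine ⟨?_, ?_, ?_⟩ <;> simp [vC, w₁, w₂]
    rcases ((hD (w₁ x) (w₂ y)).1).mp (by simp [coneBipartite, w₁, w₂, partOf]) with h1 | h1 <;>
      rcases ((hD (w₁ x') (w₂ y')).1).mp (by simp [coneBipartite, w₁, w₂, partOf]) with h2 | h2
    · exact contains_of vC (w₁ x) (w₂ y) (w₁ x') (w₂ y')
        (ne1 x y).1 (ne1 x y).2.1 (ne1 x' y').1 (ne1 x' y').2.1
        (ne1 x y).2.2 hxx' (ne1 x y').2.2 (Ne.symm (ne1 x' y).2.2) hyy' (ne1 x' y').2.2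
        hx hy h1 hx' hy' h2
    · exact contains_of vC (w₁ x) (w₂ y) (w₂ y') (w₁ x')
        (ne1 x y).1 (ne1 x y).2.1 (ne1 x' y').2.1 (ne1 x' y').1
        (ne1 x y).2.2 (ne1 x y').2.2 hxx' hyy' (Ne.symm (ne1 x' y).2.2)
        (Ne.symm (ne1 x' y').2.2)
        hx hy h1 hy' hx' h2
    · exact contains_of vC (w₂ y) (w₁ x) (w₁ x') (w₂ y')
        (ne1 x y).2.1 (ne1 x y).1 (ne1 x' y').1 (ne1 x' y').2.1
        (Ne.symm (ne1 x y).2.2) (Ne.symm (ne1 x' y).2.2) hyy' hxx' (ne1 x y').2.2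
        (ne1 x' y').2.2
        hy hx h1 hx' hy' h2
    · exact contains_of vC (w₂ y) (w₁ x) (w₂ y') (w₁ x')
        (ne1 x y).2.1 (ne1 x y).1 (ne1 x' y').2.1 (ne1 x' y').1
        (Ne.symm (ne1 x y).2.2) hyy' (Ne.symm (ne1 x' y).2.2) (ne1 x y').2.2
        hxx' (Ne.symm (ne1 x' y').2.2)
        hy hx h1 hy' hx' h2


def P1 (a : ℕ) (f : Fin a → Bool) : Prop := (∀ x, f x = true) ∨ (∀ x, f x = false)

instance (a : ℕ) : DecidablePred (P1 a) := fun _ => by unfold P1; infer_instance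

lemma free_iff (s : St a b) :
    ¬ DigraphContains bowtieInOut (toD s) ↔ P1 a s.1.1 ∨ P1 b s.1.2 := by
  rw [contains_iff (toD_isOrientation s)]
  have h1 : ∀ x : Fin a, toD s (w₁ x) vC ↔ s.1.1 x = false := fun _ => Iff.rfl
  have h2 : ∀ x : Fin a, toD s vC (w₁ x) ↔ s.1.1 x = true := fun _ => Iff.rfl
  have h3 : ∀ y : Fin b, toD s (w₂ y) vC ↔ s.1.2 y = false := fun _ => Iff.rfl
  have h4 : ∀ y : Fin b, toD s vC (w₂ y) ↔ s.1.2 y = true := fun _ => Iff.rfl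
  simp only [h1, h2, h3, h4, P1, not_and_or, not_exists, Bool.not_eq_false, Bool.not_eq_true]

lemma card_P1 (a : ℕ) (ha : 1 ≤ a) : (Finset.univ.filter (P1 a)).card = 2 := by
  have : Finset.univ.filter (P1 a) = {fun _ => true, fun _ => false} := by
    ext f
    simp only [Finset.mem_filter, Finset.mem_univ, true_and, Finset.mem_insert,
      Finset.mem_singleton, P1, funext_iff]
  rw [this]
  refine Finset.card_pair ?_
  intro h
  have := congrFun h ⟨0, ha⟩
  simp at this

noncomputable def orientEquiv (a b : ℕ) :
    St a b ≃ {D // IsOrientation (coneBipartite a b) D} :=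
  Equiv.ofBijective (fun s => ⟨toD s, toD_isOrientation s⟩)
    ⟨fun s t h => toD_injective (congrArg Subtype.val h),
     fun D => (toD_surjective D.1 D.2).imp fun _ hs => Subtype.ext hs⟩

def prodSubtypeFst {T C : Type*} (Q : T → Prop) : {s : T × C // Q s.1} ≃ {t // Q t} × C where
  toFun p := (⟨p.1.1, p.2⟩, p.1.2)
  invFun q := ⟨(q.1.1, q.2), q.1.2⟩
  left_inv _ := rfl
  right_inv _ := rfl

lemma count_main (ha : 1 ≤ a) (hb : 1 ≤ b) :
    numFreeOrientations (coneBipartite a b) bowtieInOut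
      = 2 ^ (a * b) * (2 * 2 ^ a + 2 * 2 ^ b - 4) := by
  classical
  have key : numFreeOrientations (coneBipartite a b) bowtieInOut
      = Nat.card {s : St a b // P1 a s.1.1 ∨ P1 b s.1.2} := by
    apply Nat.card_congr
    exact ((Equiv.subtypeSubtypeEquivSubtypeInter
        (fun D : Vt a b → Vt a b → Prop => IsOrientation (coneBipartite a b) D)
        (fun D => ¬ DigraphContains bowtieInOut D)).symm.trans
      (((orientEquiv a b).subtypeEquiv (fun s => by
          simp only [orientEquiv, Equiv.ofBijective_apply]
          exact (free_iff s).symm)).symm.trans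
        (Equiv.subtypeEquivRight (fun s => Iff.rfl))))
  rw [key]
  have e := prodSubtypeFst (C := Fin a → Fin b → Bool)
    (fun t : (Fin a → Bool) × (Fin b → Bool) => P1 a t.1 ∨ P1 b t.2)
  rw [Nat.card_congr e, Nat.card_eq_fintype_card, Fintype.card_prod]
  have hc : Fintype.card (Fin a → Fin b → Bool) = 2 ^ (a * b) := by
    simp [Fintype.card_fun, ← pow_mul, mul_comm]
  rw [hc, Fintype.card_subtype]
  have hsplit : (Finset.univ.filter
        (fun t : (Fin a → Bool) × (Fin b → Bool) => P1 a t.1 ∨ P1 b t.2)).card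
      = 2 * 2 ^ a + 2 * 2 ^ b - 4 := by
    have h1 : (Finset.univ.filter
        (fun t : (Fin a → Bool) × (Fin b → Bool) => P1 a t.1)).card = 2 * 2 ^ b := by
      rw [← Finset.univ_product_univ, Finset.filter_product_left, Finset.card_product,
        card_P1 a ha]
      simp [Fintype.card_fun]
    have h2 : (Finset.univ.filter
        (fun t : (Fin a → Bool) × (Fin b → Bool) => P1 b t.2)).card = 2 ^ a * 2 := by
      rw [← Finset.univ_product_univ, Finset.filter_product_right, Finset.card_product,
        card_P1 b hb]
      simp [Fintype.card_fun]
    have h3 : (Finset.univ.filter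
        (fun t : (Fin a → Bool) × (Fin b → Bool) => P1 a t.1 ∧ P1 b t.2)).card = 4 := by
      rw [← Finset.univ_product_univ, Finset.filter_product, Finset.card_product,
        card_P1 a ha, card_P1 b hb]
    have hu := Finset.card_union_add_card_inter
      (Finset.univ.filter (fun t : (Fin a → Bool) × (Fin b → Bool) => P1 a t.1))
      (Finset.univ.filter (fun t : (Fin a → Bool) × (Fin b → Bool) => P1 b t.2))
    rw [← Finset.filter_or, ← Finset.filter_and, h1, h2, h3] at hu
    omega
  rw [hsplit, mul_comm]

end Stmt8Aux

/-- For `n ≥ 3`, the number of `B⃗`-free orientations of the cone over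
`K_{⌊(n-1)/2⌋, ⌈(n-1)/2⌉}` equals `2^{|V₁||V₂|}·(2·2^{|V₁|} + 2·2^{|V₂|} - 4)`. -/
theorem stmt8 (n a b : ℕ) (hn : 3 ≤ n) (ha : a = (n - 1) / 2) (hb : b = (n - 1) - (n - 1) / 2) :
    numFreeOrientations (coneBipartite a b) bowtieInOut
      = 2 ^ (a * b) * (2 * 2 ^ a + 2 * 2 ^ b - 4) := by
  subst ha hb
  exact Stmt8Aux.count_main (by omega) (by omega)
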